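/- Suppose the functions ψ₁,…,ψ_k are formal Nilsson series in the direction of a weight vector w whose initial series in_w(ψ₁),…,in_w(ψ_k) are ℂ-linearly independent. Then ψ₁,…,ψ_k are ℂ-linearly independent. Conversely, if ψ₁,…,ψ_k are ℂ-linearly independent Nilsson series, there exists an invertible k×k complex matrix (λ_{ij}) such that the series χ_i = Σ_j λ_{ij} ψ_j have ℂ-linearly independent initial series in_w(χ₁),…,in_w(χ_k). -/

import Mathlib

open scoped Classical

/-- A term `x^a (log x)^b` of a formal Nilsson series is indexed by the pair `(a, b)`;
a formal series is encoded by its coefficient function on terms. -/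
abbrev NTerm (n : ℕ) := (Fin n → ℂ) × (Fin n → ℕ)

/-- The real part of the `w`-weight of an exponent `a ∈ ℂⁿ`: `Re(a·w)`. -/
noncomputable def wtRe {n : ℕ} (w : Fin n → ℝ) (a : Fin n → ℂ) : ℝ :=
  ∑ i, (a i).re * w i

/-- The initial series `in_w(ψ)`: the subseries of terms whose weight `Re(a·w)` is
minimal among the nonzero terms of `ψ`. -/
noncomputable def inSer {n : ℕ} (w : Fin n → ℝ) (ψ : NTerm n → ℂ) : NTerm n → ℂ :=
  fun p =>
    if ψ p ≠ 0 ∧ ∀ q : NTerm n, ψ q ≠ 0 → wtRe w p.1 ≤ wtRe w q.1 then ψ p else 0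

/-- `ψ` is a formal Nilsson series in the direction of `w`: a finite linear
combination of series of the form `Σ_{u∈C} x^{v+u} p_u(log x)` with `C` contained in
the dual of an open cone around `w`, and with uniformly bounded logarithmic degrees. -/
def IsNilsson {n : ℕ} (w : Fin n → ℝ) (ψ : NTerm n → ℂ) : Prop :=
  ∃ (V : Finset (Fin n → ℂ)) (U : Set (Fin n → ℝ)) (K : ℕ),
    IsOpen U ∧ w ∈ U ∧
    ∀ p : NTerm n, ψ p ≠ 0 →
      (∀ i, p.2 i ≤ K) ∧
      ∃ v ∈ V, ∃ u : Fin n → ℤ, (p.1 = fun i => v i + u i) ∧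
        (u = 0 ∨ ∀ w' ∈ U, 0 < ∑ i, (u i : ℝ) * w' i)

lemma inSer_eq_self {n : ℕ} {w : Fin n → ℝ} {ψ : NTerm n → ℂ} {p : NTerm n}
    (h : ∀ q, ψ q ≠ 0 → wtRe w p.1 ≤ wtRe w q.1) : inSer w ψ p = ψ p := by
  unfold inSer
  by_cases hp : ψ p = 0
  · simp [hp]
  · rw [if_pos ⟨hp, h⟩]

lemma inSer_ne_zero {n : ℕ} {w : Fin n → ℝ} {ψ : NTerm n → ℂ} {p : NTerm n}
    (h : inSer w ψ p ≠ 0) :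
    ψ p ≠ 0 ∧ ∀ q, ψ q ≠ 0 → wtRe w p.1 ≤ wtRe w q.1 := by
  by_contra hc
  unfold inSer at h
  rw [if_neg hc] at h
  exact h rfl

/-- Part 1, general form: independence of initial series implies independence. -/
lemma part1 {n m : ℕ} (w : Fin n → ℝ) (φ : Fin m → (NTerm n → ℂ))
    (h : LinearIndependent ℂ (fun i => inSer w (φ i))) : LinearIndependent ℂ φ := by
  rw [Fintype.linearIndependent_iff] at h ⊢
  intro g hg
  by_contra hc
  push_neg at hc
  have hS : (Finset.univ.filter (fun i => g i ≠ 0)).Nonempty := by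
    obtain ⟨i, hi⟩ := hc
    exact ⟨i, by simp [hi]⟩
  set S : Finset (Fin m) := Finset.univ.filter (fun i => g i ≠ 0) with hSdef
  have hne : ∀ i, ∃ p, inSer w (φ i) p ≠ 0 := by
    intro i
    by_contra hcc
    push_neg at hcc
    have hz : inSer w (φ i) = 0 := funext hcc
    have := h (fun j => if j = i then 1 else 0) (by simp [hz]) i
    simp at this
  choose P hP using hne
  set μ : Fin m → ℝ := fun i => wtRe w (P i).1 with hμ
  have hPmin : ∀ i, φ i (P i) ≠ 0 ∧ ∀ q, φ i q ≠ 0 → μ i ≤ wtRe w q.1 := by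
    intro i; exact inSer_ne_zero (hP i)
  have hμne : (S.image μ).Nonempty := hS.image μ
  set μmin := (S.image μ).min' hμne with hmm
  obtain ⟨i₀, hi₀S, hi₀⟩ := Finset.mem_image.mp ((S.image μ).min'_mem hμne)
  set T : Finset (Fin m) := S.filter (fun i => μ i = μmin) with hTdef
  have hi₀T : i₀ ∈ T := Finset.mem_filter.mpr ⟨hi₀S, hi₀⟩
  have hrel : ∑ i, (if i ∈ T then g i else 0) • inSer w (φ i) = 0 := by
    funext p
    have h1 : (∑ i, (if i ∈ T then g i else 0) • inSer w (φ i)) p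
        = ∑ i ∈ T, g i * inSer w (φ i) p := by
      rw [Finset.sum_apply]
      simp only [Pi.smul_apply, smul_eq_mul, ite_mul, zero_mul, Finset.sum_ite_mem,
        Finset.univ_inter]
    rw [h1]
    by_cases hp : wtRe w p.1 = μmin
    · have h2 : ∀ i ∈ T, inSer w (φ i) p = φ i p := by
        intro i hi
        rcases Finset.mem_filter.mp hi with ⟨_, hiμ⟩
        apply inSer_eq_self
        intro q hq
        rw [hp, ← hiμ]
        exact (hPmin i).2 q hq
      rw [Finset.sum_congr rfl (fun i hi => by rw [h2 i hi])]
      have h3 : ∑ i, g i * φ i p = 0 := by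
        have := congrFun hg p
        simpa [Finset.sum_apply] using this
      have h4 : ∀ i ∈ Finset.univ \ T, g i * φ i p = 0 := by
        intro i hi
        rcases Finset.mem_sdiff.mp hi with ⟨-, hiT⟩
        by_cases hgi : g i = 0
        · simp [hgi]
        · have hiS : i ∈ S := by simp [hSdef, hgi]
          have hiμ : μ i ≠ μmin := fun hh => hiT (Finset.mem_filter.mpr ⟨hiS, hh⟩)
          have hge : μmin ≤ μ i := Finset.min'_le _ _ (Finset.mem_image_of_mem μ hiS)
          have : φ i p = 0 := by
            by_contra hφp
            have := (hPmin i).2 p hφp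
            rw [hp] at this
            exact hiμ (le_antisymm this hge)
          simp [this]
      have h5 : ∑ i ∈ T, g i * φ i p = ∑ i, g i * φ i p := by
        rw [← Finset.sum_subset (Finset.subset_univ T)]
        intro i _ hiT
        exact h4 i (Finset.mem_sdiff.mpr ⟨Finset.mem_univ i, hiT⟩)
      rw [h5, h3]; rfl
    · have h2 : ∀ i ∈ T, inSer w (φ i) p = 0 := by
        intro i hi
        rcases Finset.mem_filter.mp hi with ⟨_, hiμ⟩
        by_contra hns
        obtain ⟨hφp, hmin⟩ := inSer_ne_zero hns
        have hle : wtRe w p.1 ≤ μ i := hmin (P i) (hPmin i).1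
        have hge : μ i ≤ wtRe w p.1 := (hPmin i).2 p hφp
        exact hp (by rw [le_antisymm hle hge, hiμ])
      rw [Finset.sum_congr rfl (fun i hi => by rw [h2 i hi])]
      simp
  have := h _ hrel i₀
  rw [if_pos hi₀T] at this
  exact (Finset.mem_filter.mp hi₀S).2 this

lemma nilsson_finite_below {n : ℕ} {w : Fin n → ℝ} {ψ : NTerm n → ℂ}
    (hN : IsNilsson w ψ) (B : ℝ) :
    {r : ℝ | (∃ p, ψ p ≠ 0 ∧ wtRe w p.1 = r) ∧ r ≤ B}.Finite := by
  obtain ⟨Vf, U, K, hU, hwU, hprop⟩ := hN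
  obtain ⟨δ, hδ, hball⟩ := Metric.isOpen_iff.mp hU w hwU
  set C : ℝ := B + ∑ v ∈ Vf, |wtRe w v| with hC
  set N : ℤ := ⌈max 0 (2 * C / δ)⌉ with hNdef
  have hN0 : (0:ℤ) ≤ N := Int.ceil_nonneg (le_max_left _ _)
  have hNR : max 0 (2 * C / δ) ≤ (N : ℝ) := Int.le_ceil _
  set Box : Set (Fin n → ℤ) := Set.pi Set.univ (fun _ => Set.Icc (-N) N) with hBoxdef
  have hBox : Box.Finite := Set.Finite.pi (fun _ => Set.finite_Icc _ _)
  apply Set.Finite.subset ((Vf.finite_toSet.prod hBox).image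
    (fun vu : (Fin n → ℂ) × (Fin n → ℤ) => wtRe w vu.1 + ∑ j, (vu.2 j : ℝ) * w j))
  rintro r ⟨⟨p, hp, hwp⟩, hrB⟩
  obtain ⟨-, v, hv, u, hpu, hcase⟩ := hprop p hp
  have hsplit : wtRe w p.1 = wtRe w v + ∑ j, (u j : ℝ) * w j := by
    rw [hpu]
    unfold wtRe
    rw [← Finset.sum_add_distrib]
    apply Finset.sum_congr rfl
    intro i _
    simp [Complex.add_re, add_mul]
  set s : ℝ := ∑ j, (u j : ℝ) * w j with hs
  have hr : r = wtRe w v + s := by rw [← hwp, hsplit]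
  have habs : |wtRe w v| ≤ ∑ v' ∈ Vf, |wtRe w v'| :=
    Finset.single_le_sum (f := fun v' => |wtRe w v'|) (fun v' _ => abs_nonneg _) hv
  have hsC : s ≤ C := by
    have : s = r - wtRe w v := by rw [hr]; ring
    rw [this, hC]
    have := neg_abs_le (wtRe w v)
    linarith
  have hu : u ∈ Box := by
    rcases hcase with h0 | hpos
    · subst h0
      intro j _
      refine Set.mem_Icc.mpr ⟨?_, ?_⟩ <;> simp <;> omega
    · intro j _
      set sgn : ℝ := if 0 ≤ u j then 1 else -1 with hsgn
      set w' : Fin n → ℝ := fun l => if l = j then w l - δ / 2 * sgn else w l with hw'def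
      have hw' : w' ∈ Metric.ball w δ := by
        rw [Metric.mem_ball, dist_pi_lt_iff hδ]
        intro l
        by_cases hl : l = j
        · subst hl
          have hwl : w' l = w l - δ / 2 * sgn := by simp [hw'def]
          rw [hwl, Real.dist_eq]
          have habs1 : |sgn| = 1 := by rw [hsgn]; split <;> simp
          have h2 : w l - δ / 2 * sgn - w l = -(δ / 2 * sgn) := by ring
          rw [h2, abs_neg, abs_mul, habs1, mul_one, abs_of_pos (by linarith)]
          linarith
        · simp [hw'def, hl, Real.dist_eq, hδ]
      have hpos' := hpos w' (hball hw')
      have hsum : ∑ l, (u l : ℝ) * w' l = s - δ / 2 * ((u j : ℝ) * sgn) := by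
        have heach : ∀ l, (u l : ℝ) * w' l
            = (u l : ℝ) * w l - (if l = j then δ / 2 * sgn * (u l : ℝ) else 0) := by
          intro l
          by_cases hl : l = j <;> simp [hw'def, hl] <;> ring
        rw [Finset.sum_congr rfl (fun l _ => heach l), Finset.sum_sub_distrib,
          Finset.sum_ite_eq' Finset.univ j]
        simp only [Finset.mem_univ, if_true, ← hs]
        ring
      rw [hsum] at hpos'
      have hsgnabs : (u j : ℝ) * sgn = |(u j : ℝ)| := by
        rw [hsgn]
        by_cases h : 0 ≤ u j
        · rw [if_pos h, mul_one, abs_of_nonneg (by exact_mod_cast h)]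
        · push_neg at h
          rw [if_neg (not_le.mpr h), abs_of_neg (by exact_mod_cast h)]
          ring
      rw [hsgnabs] at hpos'
      have h1 : |(u j : ℝ)| < 2 * C / δ := by
        rw [lt_div_iff₀ hδ]
        nlinarith
      have h2 : |(u j : ℝ)| ≤ (N : ℝ) := le_trans (le_of_lt h1) (le_trans (le_max_right _ _) hNR)
      rw [← Int.cast_abs] at h2
      have h3 : |u j| ≤ N := by exact_mod_cast h2
      exact abs_le.mp h3
  exact ⟨(v, u), ⟨hv, hu⟩, hr.symm⟩

/-- Every nonempty subset of a locally-finite-below set of reals has a least element. -/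
lemma exists_min_of_subset {A : Set ℝ} (hA : ∀ B : ℝ, {r | r ∈ A ∧ r ≤ B}.Finite)
    {S : Set ℝ} (hSA : S ⊆ A) (hS : S.Nonempty) : ∃ r ∈ S, ∀ r' ∈ S, r ≤ r' := by
  obtain ⟨B, hB⟩ := hS
  have hfin : {r | r ∈ S ∧ r ≤ B}.Finite :=
    (hA B).subset (fun r hr => ⟨hSA hr.1, hr.2⟩)
  have hne : {r | r ∈ S ∧ r ≤ B}.Nonempty := ⟨B, hB, le_refl B⟩
  obtain ⟨r, hr, hmin⟩ := Set.exists_min_image _ id hfin hne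
  refine ⟨r, hr.1, fun r' hr' => ?_⟩
  by_cases h : r' ≤ B
  · exact hmin r' ⟨hr', h⟩
  · exact le_trans hr.2 (le_of_not_ge h)

/-- The linear map cutting out the slice of weight `μ`. -/
noncomputable def sliceMap {n : ℕ} (w : Fin n → ℝ) (μ : ℝ) :
    (NTerm n → ℂ) →ₗ[ℂ] (NTerm n → ℂ) where
  toFun v := fun p => if wtRe w p.1 = μ then v p else 0
  map_add' v v' := by funext p; by_cases h : wtRe w p.1 = μ <;> simp [h]
  map_smul' a v := by funext p; by_cases h : wtRe w p.1 = μ <;> simp [h]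

@[simp] lemma sliceMap_apply {n : ℕ} (w : Fin n → ℝ) (μ : ℝ) (v : NTerm n → ℂ)
    (p : NTerm n) : sliceMap w μ v p = if wtRe w p.1 = μ then v p else 0 := rfl

/-- Functions whose nonzero terms have weights in `S` form a submodule. -/
noncomputable def wtSupSub {n : ℕ} (w : Fin n → ℝ) (S : Set ℝ) :
    Submodule ℂ (NTerm n → ℂ) where
  carrier := {v | ∀ p, v p ≠ 0 → wtRe w p.1 ∈ S}
  zero_mem' := by intro p hp; simp at hp
  add_mem' := by
    intro a b ha hb p hp
    by_cases h : a p = 0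
    · exact hb p (by simpa [h] using hp)
    · exact ha p h
  smul_mem' := by
    intro t a ha p hp
    exact ha p (by simpa using (fun h => hp (by simp [h] : (t • a) p = 0)) ∘ id)

set_option maxHeartbeats 2000000 in
/-- Decompose an independent family relative to a linear map `T`. -/
lemma decompose {F M N : Type*} [Field F] [AddCommGroup M] [Module F M]
    [AddCommGroup N] [Module F N] {m : ℕ} (χ : Fin m → M)
    (hli : LinearIndependent F χ) (T : M →ₗ[F] N) :
    ∃ (d m' : ℕ) (b : Fin d → M) (c : Fin m' → M),
      m' + d = m ∧
      (∀ a, b a ∈ Submodule.span F (Set.range χ)) ∧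
      (∀ a, c a ∈ Submodule.span F (Set.range χ)) ∧
      (∀ a, T (c a) = 0) ∧
      LinearIndependent F (fun a => T (b a)) ∧
      LinearIndependent F c ∧
      ((∃ x ∈ Submodule.span F (Set.range χ), T x ≠ 0) → 1 ≤ d) := by
  set V := Submodule.span F (Set.range χ) with hVdef
  haveI : FiniteDimensional F V := FiniteDimensional.span_of_finite F (Set.finite_range χ)
  set K' : Submodule F V := Submodule.comap V.subtype (LinearMap.ker T) with hK'def
  obtain ⟨C', hcompl⟩ := Submodule.exists_isCompl K'
  refine ⟨Module.finrank F C', Module.finrank F K', ?_⟩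
  set bC := Module.finBasis F C' with hbC
  set bK := Module.finBasis F K' with hbK
  refine ⟨fun a => ((bC a : V) : M), fun a => ((bK a : V) : M), ?_, ?_, ?_, ?_, ?_, ?_, ?_⟩
  · rw [Submodule.finrank_add_eq_of_isCompl hcompl]
    have := finrank_span_eq_card (R := F) hli
    simpa using this
  · exact fun a => ((bC a : V)).2
  · exact fun a => ((bK a : V)).2
  · intro a
    have h := (bK a).2
    exact LinearMap.mem_ker.mp (Submodule.mem_comap.mp h)
  · have hinj : LinearMap.ker ((T.comp V.subtype).comp C'.subtype) = ⊥ := by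
      apply LinearMap.ker_eq_bot'.mpr
      intro x hx
      have hxK : (x : V) ∈ K' := Submodule.mem_comap.mpr (LinearMap.mem_ker.mpr hx)
      have hx0 : (x : V) = 0 :=
        Submodule.disjoint_def.mp hcompl.disjoint _ hxK x.2
      exact Subtype.ext hx0
    exact bC.linearIndependent.map' _ hinj
  · have hinj : LinearMap.ker (V.subtype.comp K'.subtype) = ⊥ := by
      apply LinearMap.ker_eq_bot'.mpr
      intro x hx
      exact Subtype.ext (Subtype.ext hx)
    exact bK.linearIndependent.map' _ hinj
  · rintro ⟨x, hxV, hTx⟩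
    by_contra hdc
    have hd0 : Module.finrank F C' = 0 := by omega
    have hC'bot : C' = ⊥ := Submodule.finrank_eq_zero.mp hd0
    have hK'top : K' = ⊤ := by
      have := hcompl.sup_eq_top
      rwa [hC'bot, sup_bot_eq] at this
    have hmem : (⟨x, hxV⟩ : V) ∈ K' := hK'top ▸ Submodule.mem_top
    exact hTx (LinearMap.mem_ker.mp (Submodule.mem_comap.mp hmem))

set_option synthInstance.maxHeartbeats 1000000 in
set_option maxHeartbeats 4000000 in
/-- The core of part 2: any independent family with weights in a well-founded
weight set admits a recombination with independent initial series. -/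
lemma main {n : ℕ} (w : Fin n → ℝ) (A : Set ℝ)
    (hA : ∀ S : Set ℝ, S ⊆ A → S.Nonempty → ∃ r ∈ S, ∀ r' ∈ S, r ≤ r') :
    ∀ m : ℕ, ∀ χ : Fin m → (NTerm n → ℂ),
      (∀ i p, χ i p ≠ 0 → wtRe w p.1 ∈ A) → LinearIndependent ℂ χ →
      ∃ φ : Fin m → (NTerm n → ℂ),
        (∀ i, φ i ∈ Submodule.span ℂ (Set.range χ)) ∧
        LinearIndependent ℂ (fun i => inSer w (φ i)) := by
  intro m
  induction m using Nat.strong_induction_on with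
  | _ m IH =>
  intro χ hχA hli
  rcases Nat.eq_zero_or_pos m with hm | hm
  · subst hm
    exact ⟨fun _ => 0, fun i => i.elim0, linearIndependent_empty_type⟩
  set V := Submodule.span ℂ (Set.range χ) with hVdef
  set S : Set ℝ := {r | ∃ i p, χ i p ≠ 0 ∧ wtRe w p.1 = r} with hSdef
  have hSA : S ⊆ A := by
    rintro r ⟨i, p, h1, h2⟩
    rw [← h2]; exact hχA i p h1
  have hSne : S.Nonempty := by
    have h0 : χ ⟨0, hm⟩ ≠ 0 := hli.ne_zero ⟨0, hm⟩
    obtain ⟨p, hp⟩ := Function.ne_iff.mp h0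
    exact ⟨wtRe w p.1, ⟨0, hm⟩, p, hp, rfl⟩
  obtain ⟨μ, hμS, hμmin⟩ := hA S hSA hSne
  have hVS : ∀ v ∈ V, ∀ p, v p ≠ 0 → wtRe w p.1 ∈ S := by
    intro v hv
    have hle : V ≤ wtSupSub w S := by
      rw [hVdef, Submodule.span_le]
      rintro _ ⟨i, rfl⟩ p hp
      exact ⟨i, p, hp, rfl⟩
    exact hle hv
  have hVmin : ∀ v ∈ V, ∀ p, v p ≠ 0 → μ ≤ wtRe w p.1 :=
    fun v hv p hp => hμmin _ (hVS v hv p hp)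
  set T := sliceMap w μ with hTdef
  have fact2 : ∀ v ∈ V, ∀ p : NTerm n, wtRe w p.1 = μ → inSer w v p = v p := by
    intro v hv p hp
    apply inSer_eq_self
    intro q hq
    rw [hp]
    exact hVmin v hv q hq
  have fact3 : ∀ v : NTerm n → ℂ, T v = 0 → ∀ p : NTerm n, wtRe w p.1 = μ →
      inSer w v p = 0 := by
    intro v hT p hp
    by_contra h
    have hvp := (inSer_ne_zero h).1
    have := congrFun hT p
    rw [hTdef, sliceMap_apply, if_pos hp] at this
    exact hvp this
  have hTx : ∃ x ∈ Submodule.span ℂ (Set.range χ), T x ≠ 0 := by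
    obtain ⟨i, p, hp, hwp⟩ := hμS
    refine ⟨χ i, Submodule.subset_span (Set.mem_range_self i), fun h => hp ?_⟩
    have := congrFun h p
    rw [hTdef, sliceMap_apply, if_pos hwp] at this
    exact this
  obtain ⟨d, m', b, c, hdm, hbV, hcV, hcK, hTb, hcli, hdge⟩ := decompose χ hli T
  have hd1 : 1 ≤ d := hdge hTx
  have hcA : ∀ j p, c j p ≠ 0 → wtRe w p.1 ∈ A :=
    fun j p hp => hSA (hVS _ (hcV j) p hp)
  have hm'm : m' < m := by omega
  obtain ⟨φ', hφ'K, hφ'ind⟩ := IH m' hm'm c hcA hcli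
  have hspanc : Submodule.span ℂ (Set.range c) ≤ V ⊓ LinearMap.ker T := by
    rw [Submodule.span_le]
    rintro _ ⟨j, rfl⟩
    exact Submodule.mem_inf.mpr ⟨hcV j, LinearMap.mem_ker.mpr (hcK j)⟩
  have hφ'V : ∀ j, φ' j ∈ V := fun j => (Submodule.mem_inf.mp (hspanc (hφ'K j))).1
  have hφ'T : ∀ j, T (φ' j) = 0 :=
    fun j => LinearMap.mem_ker.mp (Submodule.mem_inf.mp (hspanc (hφ'K j))).2
  set e : Sum (Fin m') (Fin d) ≃ Fin m := finSumFinEquiv.trans (finCongr hdm) with hedef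
  set φS : Sum (Fin m') (Fin d) → (NTerm n → ℂ) := Sum.elim φ' b with hφSdef
  refine ⟨φS ∘ e.symm, ?_, ?_⟩
  · intro i
    rcases h : e.symm i with j | a
    · simpa [hφSdef, h] using hφ'V j
    · simpa [hφSdef, h] using hbV a
  · have hSum : LinearIndependent ℂ (fun s => inSer w (φS s)) := by
      rw [Fintype.linearIndependent_iff]
      intro g hg
      rw [Fintype.sum_sum_type] at hg
      have hgl : ∀ a, g (Sum.inr a) = 0 := by
        have hrel : ∑ a, g (Sum.inr a) • (T (b a)) = 0 := by
          funext p
          rw [Finset.sum_apply, Pi.zero_apply]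
          by_cases hp : wtRe w p.1 = μ
          · have e1 : ∀ a, T (b a) p = b a p := by
              intro a; rw [hTdef, sliceMap_apply, if_pos hp]
            have e2 : ∀ a, inSer w (b a) p = b a p := fun a => fact2 _ (hbV a) p hp
            have e3 : ∀ j, inSer w (φ' j) p = 0 := fun j => fact3 _ (hφ'T j) p hp
            have hgp := congrFun hg p
            rw [Pi.add_apply, Finset.sum_apply, Finset.sum_apply, Pi.zero_apply] at hgp
            simp only [hφSdef, Sum.elim_inl, Sum.elim_inr, Pi.smul_apply, smul_eq_mul,
              e2, e3, mul_zero, Finset.sum_const_zero, zero_add] at hgp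
            simpa only [Pi.smul_apply, smul_eq_mul, e1] using hgp
          · have e0 : ∀ a, T (b a) p = 0 := by
              intro a; rw [hTdef, sliceMap_apply, if_neg hp]
            simp [e0]
        exact Fintype.linearIndependent_iff.mp hTb _ hrel
      have hgr : ∀ j, g (Sum.inl j) = 0 := by
        apply Fintype.linearIndependent_iff.mp hφ'ind
        rw [← hg]
        simp [hgl, hφSdef]
      intro s
      cases s with
      | inl j => exact hgr j
      | inr a => exact hgl a
    have heq : (fun i => inSer w ((φS ∘ e.symm) i)) = (fun s => inSer w (φS s)) ∘ e.symm :=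
      rfl
    rw [heq]
    exact (linearIndependent_equiv e.symm).mpr hSum

set_option synthInstance.maxHeartbeats 1000000 in
set_option maxHeartbeats 2000000 in
/-- If the initial series `in_w(ψ₁),…,in_w(ψ_k)` are linearly independent, so are
`ψ₁,…,ψ_k`; conversely, if `ψ₁,…,ψ_k` are linearly independent, some invertible
linear combinations `χᵢ = Σⱼ λᵢⱼ ψⱼ` have linearly independent initial series. -/
theorem stmt18 (n k : ℕ) (w : Fin n → ℝ) (ψ : Fin k → (NTerm n → ℂ))
    (hN : ∀ i, IsNilsson w (ψ i)) :
    (LinearIndependent ℂ (fun i => inSer w (ψ i)) → LinearIndependent ℂ ψ) ∧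
    (LinearIndependent ℂ ψ →
      ∃ M : Matrix (Fin k) (Fin k) ℂ, IsUnit M ∧
        LinearIndependent ℂ
          (fun i => inSer w (fun p => ∑ j, M i j * ψ j p))) := by
  constructor
  · exact part1 w ψ
  · intro hli
    set A : Set ℝ := {r | ∃ i p, ψ i p ≠ 0 ∧ wtRe w p.1 = r} with hAdef
    have hAfin : ∀ B : ℝ, {r | r ∈ A ∧ r ≤ B}.Finite := by
      intro B
      have hsub : {r | r ∈ A ∧ r ≤ B} ⊆
          ⋃ i : Fin k, {r : ℝ | (∃ p, ψ i p ≠ 0 ∧ wtRe w p.1 = r) ∧ r ≤ B} := by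
        rintro r ⟨⟨i, p, h1, h2⟩, hrB⟩
        exact Set.mem_iUnion.mpr ⟨i, ⟨p, h1, h2⟩, hrB⟩
      exact Set.Finite.subset
        (Set.finite_iUnion (fun i => nilsson_finite_below (hN i) B)) hsub
    have hA : ∀ S : Set ℝ, S ⊆ A → S.Nonempty → ∃ r ∈ S, ∀ r' ∈ S, r ≤ r' :=
      fun S hSA hS => exists_min_of_subset hAfin hSA hS
    have hψA : ∀ i p, ψ i p ≠ 0 → wtRe w p.1 ∈ A := fun i p hp => ⟨i, p, hp, rfl⟩
    obtain ⟨φ, hφV, hφind⟩ := main w A hA k ψ hψA hli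
    have hφli : LinearIndependent ℂ φ := part1 w φ hφind
    set B := Module.Basis.span hli with hB
    set M : Matrix (Fin k) (Fin k) ℂ := fun i j => B.repr ⟨φ i, hφV i⟩ j with hM
    have hrep : ∀ i, (fun p => ∑ j, M i j * ψ j p) = φ i := by
      intro i
      have h1 := B.sum_repr ⟨φ i, hφV i⟩
      have h2 := congrArg Subtype.val h1
      rw [AddSubmonoidClass.coe_finset_sum] at h2
      simp only [SetLike.val_smul] at h2
      have h3 : ∑ j, (M i j) • ψ j = φ i := by
        rw [← h2]
        apply Finset.sum_congr rfl
        intro j _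
        rw [hB, Module.Basis.span_apply]
      funext p
      have h4 := congrFun h3 p
      rw [Finset.sum_apply] at h4
      simpa [smul_eq_mul] using h4
    refine ⟨M, ?_, ?_⟩
    · apply Matrix.linearIndependent_rows_iff_isUnit.mp
      rw [Fintype.linearIndependent_iff]
      intro g hg
      have hcoef : ∀ j, ∑ i, g i * M i j = 0 := by
        intro j
        have := congrFun hg j
        simpa [Finset.sum_apply] using this
      apply Fintype.linearIndependent_iff.mp hφli g
      funext p
      rw [Finset.sum_apply]
      have h1 : ∀ i, φ i p = ∑ j, M i j * ψ j p := fun i => (congrFun (hrep i) p).symm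
      simp only [Pi.smul_apply, smul_eq_mul, h1, Finset.mul_sum]
      rw [Finset.sum_comm]
      have h5 : ∀ j, ∑ i, g i * (M i j * ψ j p) = (∑ i, g i * M i j) * ψ j p := by
        intro j
        rw [Finset.sum_mul]
        apply Finset.sum_congr rfl
        intro i _
        ring
      rw [Finset.sum_congr rfl (fun j _ => h5 j)]
      simp [hcoef]
    · have heq : (fun i => inSer w (fun p => ∑ j, M i j * ψ j p))
          = fun i => inSer w (φ i) := by
        funext i
        rw [hrep i]
      rw [heq]
      exact hφind
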